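/- arXiv:2507.09978 — 10 statements merged into one kernel-verified Lean document; each statement's English description precedes it below -/
import Mathlib

section
/- For 1 < σ < 2 and ε > 0, define Φ(s) = (1/σ)[(ε+|s|)^σ − ε^σ] − ε^(σ−1)|s| and Ψ(s) = (ε+|s|)^(σ/2) − ε^(σ/2). Then for every real s, (2(σ−1)/σ²)·Ψ(s)² ≤ Φ(s). -/
theorem stmt0 (σ ε : ℝ) (hσ1 : 1 < σ) (hσ2 : σ < 2) (hε : 0 < ε) (s : ℝ) :
    (2 * (σ - 1) / σ ^ 2) * ((ε + |s|) ^ (σ / 2) - ε ^ (σ / 2)) ^ 2 ≤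
      (1 / σ) * ((ε + |s|) ^ σ - ε ^ σ) - ε ^ (σ - 1) * |s| := by
  have hσ0 : 0 < σ := by linarith
  set c : ℝ := 2 * (σ - 1) / σ ^ 2 with hc
  set k : ℝ := 2 * (σ - 1) / σ with hk
  have hk0 : 0 ≤ k := by
    apply div_nonneg <;> linarith
  have hk1 : k ≤ 1 := by
    rw [hk, div_le_one hσ0]; linarith
  set F : ℝ → ℝ := fun t =>
    (1 / σ) * ((ε + t) ^ σ - ε ^ σ) - ε ^ (σ - 1) * t
      - c * ((ε + t) ^ (σ / 2) - ε ^ (σ / 2)) ^ 2 with hF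
  -- derivative of F
  have hderiv : ∀ x : ℝ, 0 ≤ x → HasDerivAt F
      ((1 / σ) * (σ * (ε + x) ^ (σ - 1)) - ε ^ (σ - 1)
        - c * (2 * ((ε + x) ^ (σ / 2) - ε ^ (σ / 2)) * (σ / 2 * (ε + x) ^ (σ / 2 - 1)))) x := by
    intro x hx
    have hεx : (0:ℝ) < ε + x := by linarith
    have h1 : HasDerivAt (fun t : ℝ => ε + t) 1 x := by
      simpa using (hasDerivAt_id x).const_add ε
    have h2 : HasDerivAt (fun t : ℝ => (ε + t) ^ σ) (σ * (ε + x) ^ (σ - 1)) x := by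
      have := (Real.hasDerivAt_rpow_const (x := ε + x) (p := σ) (Or.inl hεx.ne')).comp x h1
      simpa [Function.comp_def] using this
    have h3 : HasDerivAt (fun t : ℝ => (ε + t) ^ (σ / 2)) (σ / 2 * (ε + x) ^ (σ / 2 - 1)) x := by
      have := (Real.hasDerivAt_rpow_const (x := ε + x) (p := σ / 2) (Or.inl hεx.ne')).comp x h1
      simpa [Function.comp_def] using this
    have h4 : HasDerivAt (fun t : ℝ => ((ε + t) ^ (σ / 2) - ε ^ (σ / 2)) ^ 2)
        (2 * ((ε + x) ^ (σ / 2) - ε ^ (σ / 2)) * (σ / 2 * (ε + x) ^ (σ / 2 - 1))) x := by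
      have h5 := (h3.sub_const (ε ^ (σ / 2)))
      have := h5.pow 2
      simpa [Pi.pow_def, mul_comm, mul_assoc, mul_left_comm] using this
    have h6 := (((h2.sub_const (ε ^ σ)).const_mul (1 / σ)).sub
        ((hasDerivAt_id x).const_mul (ε ^ (σ - 1)))).sub (h4.const_mul c)
    simpa [hF, mul_comm, Pi.sub_def] using h6
  -- derivative is nonnegative
  have hnn : ∀ x : ℝ, 0 ≤ x →
      0 ≤ (1 / σ) * (σ * (ε + x) ^ (σ - 1)) - ε ^ (σ - 1)
        - c * (2 * ((ε + x) ^ (σ / 2) - ε ^ (σ / 2)) * (σ / 2 * (ε + x) ^ (σ / 2 - 1))) := by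
    intro x hx
    have hεx : (0:ℝ) < ε + x := by linarith
    set A : ℝ := (ε + x) ^ (σ - 1) with hA
    set B : ℝ := ε ^ (σ / 2) * (ε + x) ^ (σ / 2 - 1) with hB
    have hA0 : 0 ≤ A := Real.rpow_nonneg hεx.le _
    have hB0 : 0 ≤ B := mul_nonneg (Real.rpow_nonneg hε.le _) (Real.rpow_nonneg hεx.le _)
    -- AM-GM
    have hgm : A ^ (1 - k) * B ^ k ≤ (1 - k) * A + k * B :=
      Real.geom_mean_le_arith_mean2_weighted (by linarith) hk0 hA0 hB0 (by ring)
    have hAe : A ^ (1 - k) = (ε + x) ^ ((σ - 1) * (1 - k)) := by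
      rw [hA, ← Real.rpow_mul hεx.le]
    have hBe : B ^ k = ε ^ (σ / 2 * k) * (ε + x) ^ ((σ / 2 - 1) * k) := by
      rw [hB, Real.mul_rpow (Real.rpow_nonneg hε.le _) (Real.rpow_nonneg hεx.le _),
        ← Real.rpow_mul hε.le, ← Real.rpow_mul hεx.le]
    have hexp1 : σ / 2 * k = σ - 1 := by
      rw [hk]; field_simp
    have hexp2 : (σ - 1) * (1 - k) + (σ / 2 - 1) * k = 0 := by
      rw [hk]; field_simp; ring
    have hprod : A ^ (1 - k) * B ^ k = ε ^ (σ - 1) := by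
      rw [hAe, hBe, hexp1]
      rw [mul_comm (ε ^ (σ - 1)) _, ← mul_assoc, ← Real.rpow_add hεx, hexp2,
        Real.rpow_zero, one_mul]
    have hkey : ε ^ (σ - 1) ≤ (1 - k) * A + k * B := hprod ▸ hgm
    -- simplify the derivative expression
    have hsplit : (ε + x) ^ (σ / 2) * (ε + x) ^ (σ / 2 - 1) = A := by
      rw [hA, ← Real.rpow_add hεx]; congr 1; ring
    have hcσ : c * σ = k := by
      rw [hc, hk]; field_simp
    have : (1 / σ) * (σ * A) - ε ^ (σ - 1)
        - c * (2 * ((ε + x) ^ (σ / 2) - ε ^ (σ / 2)) * (σ / 2 * (ε + x) ^ (σ / 2 - 1)))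
        = (1 - k) * A + k * B - ε ^ (σ - 1) := by
      have h1 : (1 / σ) * (σ * A) = A := by field_simp
      rw [h1]
      have : c * (2 * ((ε + x) ^ (σ / 2) - ε ^ (σ / 2)) * (σ / 2 * (ε + x) ^ (σ / 2 - 1)))
          = k * ((ε + x) ^ (σ / 2) * (ε + x) ^ (σ / 2 - 1))
            - k * (ε ^ (σ / 2) * (ε + x) ^ (σ / 2 - 1)) := by
        rw [← hcσ]; ring
      rw [this, hsplit, ← hB]; ring
    rw [this]
    linarith
  -- monotonicity
  have hmono : MonotoneOn F (Set.Ici (0:ℝ)) := by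
    apply monotoneOn_of_deriv_nonneg (convex_Ici 0)
    · exact fun x hx => ((hderiv x hx).continuousAt).continuousWithinAt
    · intro x hx
      rw [interior_Ici] at hx
      exact ((hderiv x (le_of_lt hx)).differentiableAt).differentiableWithinAt
    · intro x hx
      rw [interior_Ici] at hx
      rw [(hderiv x (le_of_lt hx)).deriv]
      exact hnn x (le_of_lt hx)
  have h0 : F 0 = 0 := by simp [hF]
  have hle : F 0 ≤ F (|s|) := hmono (Set.self_mem_Ici) (Set.mem_Ici.2 (abs_nonneg s)) (abs_nonneg s)
  rw [h0] at hle
  have : c * ((ε + |s|) ^ (σ / 2) - ε ^ (σ / 2)) ^ 2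
      ≤ (1 / σ) * ((ε + |s|) ^ σ - ε ^ σ) - ε ^ (σ - 1) * |s| := by
    have := hle
    simp only [hF] at this
    linarith
  exact this
end

section
/- For 1 < σ < 2 and ε > 0, define Φ(s) = (1/σ)[(ε+|s|)^σ − ε^σ] − ε^(σ−1)|s| and Ψ(s) = (ε+|s|)^(σ/2) − ε^(σ/2). Then for every real s, Φ(s) ≤ Ψ(s)². -/
open Real Set

theorem stmt1 (σ ε : ℝ) (hσ1 : 1 < σ) (hσ2 : σ < 2) (hε : 0 < ε) (s : ℝ) :
    (1 / σ) * ((ε + |s|) ^ σ - ε ^ σ) - ε ^ (σ - 1) * |s| ≤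
      ((ε + |s|) ^ (σ / 2) - ε ^ (σ / 2)) ^ 2 := by
  set g : ℝ → ℝ := fun t =>
    (t ^ (σ / 2) - ε ^ (σ / 2)) ^ 2 - ((1 / σ) * (t ^ σ - ε ^ σ) - ε ^ (σ - 1) * (t - ε))
  have hσ0 : (0:ℝ) < σ := by linarith
  have hderiv : ∀ t ∈ Ioi ε, HasDerivAt g
      (2 * (t ^ (σ / 2) - ε ^ (σ / 2)) ^ 1 * (σ / 2 * t ^ (σ / 2 - 1)) -
        (1 / σ * (σ * t ^ (σ - 1)) - ε ^ (σ - 1) * 1)) t := by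
    intro t ht
    have ht0 : t ≠ 0 := by have := hε.trans ht; positivity
    have h1 : HasDerivAt (fun t : ℝ => t ^ (σ / 2)) (σ / 2 * t ^ (σ / 2 - 1)) t :=
      Real.hasDerivAt_rpow_const (Or.inl ht0)
    have h2 : HasDerivAt (fun t : ℝ => t ^ σ) (σ * t ^ (σ - 1)) t :=
      Real.hasDerivAt_rpow_const (Or.inl ht0)
    exact ((h1.sub_const _).pow 2).sub
      (((h2.sub_const _).const_mul (1 / σ)).sub (((hasDerivAt_id t).sub_const ε).const_mul _))
  have hcont : ContinuousOn g (Ici ε) := by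
    have h1 : Continuous fun t : ℝ => t ^ (σ / 2) :=
      Real.continuous_rpow_const (by positivity)
    have h2 : Continuous fun t : ℝ => t ^ σ :=
      Real.continuous_rpow_const (by positivity)
    fun_prop
  have hmono : MonotoneOn g (Ici ε) := by
    apply monotoneOn_of_deriv_nonneg (convex_Ici ε) hcont
    · intro t ht
      rw [interior_Ici] at ht
      exact (hderiv t ht).differentiableAt.differentiableWithinAt
    · intro t ht
      rw [interior_Ici] at ht
      rw [(hderiv t ht).deriv]
      have ht0 : (0:ℝ) < t := hε.trans ht
      have hmul : t ^ (σ / 2) * t ^ (σ / 2 - 1) = t ^ (σ - 1) := by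
        rw [← Real.rpow_add ht0]; ring_nf
      have hemul : ε ^ (σ / 2) * ε ^ (σ / 2 - 1) = ε ^ (σ - 1) := by
        rw [← Real.rpow_add hε]; ring_nf
      have hkey : t ^ (σ / 2 - 1) ≤ ε ^ (σ / 2 - 1) :=
        Real.rpow_le_rpow_of_nonpos hε ht.le (by linarith)
      have hbase : ε ^ (σ - 1) ≤ t ^ (σ - 1) :=
        Real.rpow_le_rpow hε.le ht.le (by linarith)
      have hp1 : (0:ℝ) ≤ ε ^ (σ / 2) := by positivity
      have hkey' : ε ^ (σ / 2) * t ^ (σ / 2 - 1) ≤ ε ^ (σ - 1) := by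
        calc ε ^ (σ / 2) * t ^ (σ / 2 - 1) ≤ ε ^ (σ / 2) * ε ^ (σ / 2 - 1) :=
              mul_le_mul_of_nonneg_left hkey hp1
          _ = ε ^ (σ - 1) := hemul
      have hinv : 1 / σ * (σ * t ^ (σ - 1)) = t ^ (σ - 1) := by field_simp
      rw [hinv, pow_one, mul_one]
      have hexp : 2 * (t ^ (σ / 2) - ε ^ (σ / 2)) * (σ / 2 * t ^ (σ / 2 - 1)) =
          σ * t ^ (σ - 1) - σ * (ε ^ (σ / 2) * t ^ (σ / 2 - 1)) := by
        rw [← hmul]; ring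
      rw [hexp]
      nlinarith [mul_le_mul_of_nonneg_left hkey' hσ0.le,
        mul_nonneg (by linarith : (0:ℝ) ≤ σ - 1)
          (by linarith : (0:ℝ) ≤ t ^ (σ - 1) - ε ^ (σ - 1))]
  have hT : ε ≤ ε + |s| := by have := abs_nonneg s; linarith
  have h0 : g ε = 0 := by simp [g]
  have := hmono (self_mem_Ici) hT hT
  rw [h0] at this
  simpa [g] using this
end

section
/- For 1 < σ < 2 and ε > 0, define φ(s) = [(ε+|s|)^(σ−1) − ε^(σ−1)]·sign(s) and Ψ(s) = (ε+|s|)^(σ/2) − ε^(σ/2). Then for every real s, |φ(s)| ≤ Ψ(s)^(2(σ−1)/σ). -/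
lemma rpow_sub_rpow_le (x y p : ℝ) (hy : 0 ≤ y) (hxy : y ≤ x) (hp : 0 ≤ p)
    (hp1 : p ≤ 1) : x ^ p - y ^ p ≤ (x - y) ^ p := by
  have h := NNReal.rpow_add_le_add_rpow (x - y).toNNReal y.toNNReal hp hp1
  have hxy' : 0 ≤ x - y := by linarith
  have := (NNReal.coe_le_coe).2 h
  push_cast [NNReal.coe_rpow] at this
  rw [Real.coe_toNNReal _ hxy', Real.coe_toNNReal _ hy] at this
  have hx : x - y + y = x := by ring
  rw [hx] at this
  linarith

theorem stmt2 (σ ε : ℝ) (hσ1 : 1 < σ) (hσ2 : σ < 2) (hε : 0 < ε) (s : ℝ) :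
    |((ε + |s|) ^ (σ - 1) - ε ^ (σ - 1)) * Real.sign s| ≤
      ((ε + |s|) ^ (σ / 2) - ε ^ (σ / 2)) ^ (2 * (σ - 1) / σ) := by
  set a := ε + |s| with ha
  have hεa : ε ≤ a := by simp [ha, abs_nonneg]
  have hε0 : (0:ℝ) ≤ ε := hε.le
  have ha0 : (0:ℝ) ≤ a := le_trans hε0 hεa
  have hσ0 : (0:ℝ) < σ := by linarith
  have hA : 0 ≤ a ^ (σ - 1) - ε ^ (σ - 1) := by
    have := Real.rpow_le_rpow hε0 hεa (by linarith : (0:ℝ) ≤ σ - 1)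
    linarith
  have hstep : |(a ^ (σ - 1) - ε ^ (σ - 1)) * Real.sign s| ≤
      a ^ (σ - 1) - ε ^ (σ - 1) := by
    rw [abs_mul, abs_of_nonneg hA]
    have : |Real.sign s| ≤ 1 := by
      rcases Real.sign_apply_eq s with h | h | h <;> simp [h]
    nlinarith [abs_nonneg (Real.sign s)]
  refine hstep.trans ?_
  set p := 2 * (σ - 1) / σ with hpdef
  have hp0 : 0 ≤ p := div_nonneg (by linarith) hσ0.le
  have hp1 : p ≤ 1 := by
    rw [hpdef, div_le_one hσ0]; linarith
  have hmono : ε ^ (σ / 2) ≤ a ^ (σ / 2) :=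
    Real.rpow_le_rpow hε0 hεa (by positivity)
  have key := rpow_sub_rpow_le (a ^ (σ / 2)) (ε ^ (σ / 2)) p
    (by positivity) hmono hp0 hp1
  have hexp : σ / 2 * p = σ - 1 := by
    rw [hpdef]; field_simp
  rw [show ((a ^ (σ/2)) ^ p) = a ^ (σ - 1) by
      rw [← Real.rpow_mul ha0, hexp],
    show ((ε ^ (σ/2)) ^ p) = ε ^ (σ - 1) by
      rw [← Real.rpow_mul hε0, hexp]] at key
  exact key
end

section
/- For 1 < σ < 2 and ε > 0, define φ(s) = [(ε+|s|)^(σ−1) − ε^(σ−1)]·sign(s) and Ψ(s) = (ε+|s|)^(σ/2) − ε^(σ/2). Then for every real s, s·φ(s) ≤ (2/σ)·Ψ(s)². -/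
theorem stmt3 (σ ε : ℝ) (hσ1 : 1 < σ) (hσ2 : σ < 2) (hε : 0 < ε) (s : ℝ) :
    s * (((ε + |s|) ^ (σ - 1) - ε ^ (σ - 1)) * Real.sign s) ≤
      (2 / σ) * ((ε + |s|) ^ (σ / 2) - ε ^ (σ / 2)) ^ 2 := by
  have hs : s * Real.sign s = |s| := by
    rcases lt_trichotomy s 0 with h | h | h
    · rw [Real.sign_of_neg h, abs_of_neg h]; ring
    · simp [h]
    · rw [Real.sign_of_pos h, abs_of_pos h]; ring
  have key : s * (((ε + |s|) ^ (σ - 1) - ε ^ (σ - 1)) * Real.sign s)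
      = |s| * ((ε + |s|) ^ (σ - 1) - ε ^ (σ - 1)) := by
    rw [← hs]; ring
  rw [key]
  set a := ε with ha
  set b := ε + |s| with hb
  have ha0 : (0:ℝ) < a := hε
  have hb0 : (0:ℝ) < b := by positivity
  set A := a ^ (σ / 2) with hA
  set B := b ^ (σ / 2) with hB
  have hA0 : 0 < A := Real.rpow_pos_of_pos ha0 _
  have hB0 : 0 < B := Real.rpow_pos_of_pos hb0 _
  have haA : a ^ σ = A ^ 2 := by
    rw [hA, ← Real.rpow_natCast (a ^ (σ/2)) 2, ← Real.rpow_mul ha0.le]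
    norm_num
  have hbB : b ^ σ = B ^ 2 := by
    rw [hB, ← Real.rpow_natCast (b ^ (σ/2)) 2, ← Real.rpow_mul hb0.le]
    norm_num
  -- expand b^(σ-1)*b = b^σ etc.
  have hb1 : b ^ (σ - 1) * b = b ^ σ := by
    rw [← Real.rpow_add_one hb0.ne']; norm_num
  have ha1 : a ^ (σ - 1) * a = a ^ σ := by
    rw [← Real.rpow_add_one ha0.ne']; norm_num
  -- AM-GM : a * b^(σ-1) + b * a^(σ-1) ≥ 2 * A * B
  have hprod : (a * b ^ (σ - 1)) * (b * a ^ (σ - 1)) = (A * B) ^ 2 := by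
    have : (a * b ^ (σ - 1)) * (b * a ^ (σ - 1)) = (a ^ (σ-1) * a) * (b ^ (σ-1) * b) := by ring
    rw [this, ha1, hb1, haA, hbB]; ring
  have hx0 : 0 < a * b ^ (σ - 1) := by positivity
  have hy0 : 0 < b * a ^ (σ - 1) := by positivity
  have hamgm : 2 * (A * B) ≤ a * b ^ (σ - 1) + b * a ^ (σ - 1) := by
    nlinarith [sq_nonneg (a * b ^ (σ - 1) - b * a ^ (σ - 1)), mul_pos hA0 hB0]
  -- |s| = b - a
  have habs : |s| = b - a := by rw [hb]; ring
  have expand : |s| * (b ^ (σ - 1) - a ^ (σ - 1))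
      = B ^ 2 + A ^ 2 - (a * b ^ (σ - 1) + b * a ^ (σ - 1)) := by
    rw [habs, ← haA, ← hbB, ← hb1, ← ha1]; ring
  rw [expand]
  have h1 : B ^ 2 + A ^ 2 - (a * b ^ (σ - 1) + b * a ^ (σ - 1)) ≤ (B - A) ^ 2 := by
    nlinarith
  have hσ0 : 0 < σ := by linarith
  have h2 : (1:ℝ) ≤ 2 / σ := by
    rw [le_div_iff₀ hσ0]; linarith
  have h3 : (B - A) ^ 2 ≤ 2 / σ * (B - A) ^ 2 := le_mul_of_one_le_left (sq_nonneg _) h2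
  exact h1.trans h3
end

section
/- Fix 0 < λ < 1 and ε > 0, and define φ_ε(s) = (ε^(−λ) − (ε+|s|)^(−λ))·sign(s). Then there exist positive constants c₁, c₂ depending only on λ (not on ε) such that for all ε > 0 and all real s: c₁·|s| / (ε^λ (ε+|s|)) ≤ |φ_ε(s)| ≤ c₂·|s| / (ε^λ (ε+|s|)). -/
lemma key_aux (lam : ℝ) (hl0 : 0 < lam) (hl1 : lam < 1) (ε t : ℝ) (hε : 0 < ε)
    (ht : 0 ≤ t) :
    lam * t / (ε ^ lam * (ε + t)) ≤ ε ^ (-lam) - (ε + t) ^ (-lam) ∧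
    ε ^ (-lam) - (ε + t) ^ (-lam) ≤ t / (ε ^ lam * (ε + t)) := by
  have hεt : 0 < ε + t := by linarith
  set x : ℝ := t / (ε + t) with hxdef
  have hx0 : 0 ≤ x := div_nonneg ht hεt.le
  have h1x : 1 - x = ε / (ε + t) := by rw [hxdef]; field_simp; ring
  have h1x0 : 0 < 1 - x := by rw [h1x]; positivity
  have hεl : (0:ℝ) < ε ^ lam := Real.rpow_pos_of_pos hε _
  -- key identity: ε ^ (-lam) - (ε+t) ^ (-lam) = ε ^ (-lam) * (1 - (1-x)^lam)
  have hid : ε ^ (-lam) - (ε + t) ^ (-lam) = ε ^ (-lam) * (1 - (1 - x) ^ lam) := by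
    rw [h1x, Real.div_rpow hε.le hεt.le, Real.rpow_neg hε.le, Real.rpow_neg hεt.le]
    have hεtl : (0:ℝ) < (ε + t) ^ lam := Real.rpow_pos_of_pos hεt _
    field_simp
  have hrhs : t / (ε ^ lam * (ε + t)) = ε ^ (-lam) * x := by
    rw [Real.rpow_neg hε.le, hxdef]
    field_simp
  -- Bernoulli: (1-x)^lam ≤ 1 - lam * x
  have hbern : (1 - x) ^ lam ≤ 1 - lam * x := by
    have := rpow_one_add_le_one_add_mul_self (s := -x) (p := lam)
      (by linarith) hl0.le hl1.le
    simpa [sub_eq_add_neg, mul_neg] using this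
  -- upper: 1 - x ≤ (1-x)^lam
  have hup : 1 - x ≤ (1 - x) ^ lam := by
    have hx1 : 1 - x ≤ 1 := by linarith
    have := Real.rpow_le_rpow_of_exponent_ge h1x0 hx1 hl1.le
    simpa using this
  have hεnl : (0:ℝ) < ε ^ (-lam) := Real.rpow_pos_of_pos hε _
  constructor
  · have : lam * t / (ε ^ lam * (ε + t)) = ε ^ (-lam) * (lam * x) := by
      rw [Real.rpow_neg hε.le, hxdef]; field_simp; try ring
    rw [this, hid]
    have : lam * x ≤ 1 - (1 - x) ^ lam := by linarith
    nlinarith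
  · rw [hrhs, hid]
    have : 1 - (1 - x) ^ lam ≤ x := by linarith
    nlinarith

theorem stmt4 (lam : ℝ) (hl0 : 0 < lam) (hl1 : lam < 1) :
    ∃ c₁ c₂ : ℝ, 0 < c₁ ∧ 0 < c₂ ∧ ∀ ε : ℝ, 0 < ε → ∀ s : ℝ,
      c₁ * |s| / (ε ^ lam * (ε + |s|)) ≤
        |(ε ^ (-lam) - (ε + |s|) ^ (-lam)) * Real.sign s| ∧
      |(ε ^ (-lam) - (ε + |s|) ^ (-lam)) * Real.sign s| ≤
        c₂ * |s| / (ε ^ lam * (ε + |s|)) := by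
  refine ⟨lam, 1, hl0, one_pos, fun ε hε s => ?_⟩
  rcases eq_or_ne s 0 with hs | hs
  · simp [hs]
  · have hsign : |Real.sign s| = 1 := by
      rcases lt_or_gt_of_ne hs with h | h
      · simp [Real.sign_of_neg h]
      · simp [Real.sign_of_pos h]
    have hεt : 0 < ε + |s| := by have := abs_pos.mpr hs; linarith
    have hnn : (ε + |s|) ^ (-lam) ≤ ε ^ (-lam) := by
      exact Real.rpow_le_rpow_of_nonpos hε (by have := abs_nonneg s; linarith) (by linarith)
    have habs : |(ε ^ (-lam) - (ε + |s|) ^ (-lam)) * Real.sign s|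
        = ε ^ (-lam) - (ε + |s|) ^ (-lam) := by
      rw [abs_mul, hsign, mul_one, abs_of_nonneg (by linarith)]
    rw [habs]
    have := key_aux lam hl0 hl1 ε |s| hε (abs_nonneg s)
    refine ⟨this.1, ?_⟩
    rw [one_mul]
    exact this.2
end

section
/- Fix 0 < λ < 1 and ε > 0, and define Φ_ε(s) = |s|/ε^λ − (1/(1−λ))·[(ε+|s|)^(1−λ) − ε^(1−λ)]. Then there exist positive constants c₃, c₄ depending only on λ such that for all ε > 0 and all real s: c₃·s² / (ε^λ (ε+|s|)) ≤ Φ_ε(s) ≤ c₄·s² / (ε^λ (ε+|s|)). -/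
open Real Set

private lemma bern {lam x : ℝ} (hl0 : 0 < lam) (hl1 : lam < 1) (hx : 0 ≤ x) :
    x ^ lam ≤ 1 - lam + lam * x := by
  have h := Real.geom_mean_le_arith_mean2_weighted (by linarith : (0:ℝ) ≤ 1 - lam) hl0.le
    (by norm_num : (0:ℝ) ≤ 1) hx (by ring)
  simpa [Real.one_rpow] using h.trans_eq (by ring)

private lemma hasDerivPhi {lam ε : ℝ} (hl1 : lam < 1) (hε : 0 < ε) {a : ℝ} (ha : 0 ≤ a) :
    HasDerivAt (fun a : ℝ => a / ε ^ lam - 1 / (1 - lam) * ((ε + a) ^ (1 - lam) - ε ^ (1 - lam)))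
      (1 / ε ^ lam - ((ε + a) ^ lam)⁻¹) a := by
  have hb : (0:ℝ) < ε + a := by linarith
  have h1 : HasDerivAt (fun a : ℝ => ε + a) 1 a := (hasDerivAt_id a).const_add ε
  have h2 : HasDerivAt (fun a : ℝ => (ε + a) ^ (1 - lam)) (1 * (1 - lam) * (ε + a) ^ (1 - lam - 1)) a :=
    h1.rpow_const (Or.inl hb.ne')
  have h3 : HasDerivAt (fun a : ℝ => a / ε ^ lam) (1 / ε ^ lam) a := by
    simpa using (hasDerivAt_id a).div_const (ε ^ lam)
  have h4 := h3.sub ((h2.sub_const (ε ^ (1 - lam))).const_mul (1 / (1 - lam)))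
  refine h4.congr_deriv ?_
  have hE : (0:ℝ) < ε ^ lam := rpow_pos_of_pos hε lam
  have hB : (0:ℝ) < (ε + a) ^ lam := rpow_pos_of_pos hb lam
  have hneg : (ε + a) ^ (1 - lam - 1) = ((ε + a) ^ lam)⁻¹ := by
    rw [show (1 - lam - 1) = -lam by ring, Real.rpow_neg hb.le]
  rw [hneg]
  have h1l : (1:ℝ) - lam ≠ 0 := by linarith
  field_simp

private lemma hasDerivQ {ε : ℝ} (hε : 0 < ε) (c : ℝ) {E : ℝ} (hE : 0 < E) {a : ℝ} (ha : 0 ≤ a) :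
    HasDerivAt (fun a : ℝ => c * a ^ 2 / (E * (ε + a)))
      ((c * (2 * a) * (E * (ε + a)) - c * a ^ 2 * E) / (E * (ε + a)) ^ 2) a := by
  have hb : (0:ℝ) < ε + a := by linarith
  have hN : HasDerivAt (fun a : ℝ => c * a ^ 2) (c * (2 * a)) a := by
    simpa using (hasDerivAt_pow 2 a).const_mul c
  have hD : HasDerivAt (fun a : ℝ => E * (ε + a)) E a := by
    simpa using ((hasDerivAt_id a).const_add ε).const_mul E
  exact hN.div hD (by positivity)

private lemma mono_help (f : ℝ → ℝ) (f' : ℝ → ℝ)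
    (hd : ∀ a : ℝ, 0 ≤ a → HasDerivAt f (f' a) a)
    (h0 : ∀ a : ℝ, 0 < a → 0 ≤ f' a) {a : ℝ} (ha : 0 ≤ a) : f 0 ≤ f a := by
  have hm : MonotoneOn f (Ici 0) := by
    apply monotoneOn_of_deriv_nonneg (convex_Ici 0)
    · exact fun x hx => (hd x hx).continuousAt.continuousWithinAt
    · intro x hx
      rw [interior_Ici] at hx
      exact (hd x (le_of_lt hx)).differentiableAt.differentiableWithinAt
    · intro x hx
      rw [interior_Ici] at hx
      rw [(hd x (le_of_lt hx)).deriv]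
      exact h0 x hx
  exact hm self_mem_Ici ha ha

theorem stmt6 (lam : ℝ) (hl0 : 0 < lam) (hl1 : lam < 1) :
    ∃ c₃ c₄ : ℝ, 0 < c₃ ∧ 0 < c₄ ∧ ∀ ε : ℝ, 0 < ε → ∀ s : ℝ,
      c₃ * s ^ 2 / (ε ^ lam * (ε + |s|)) ≤
        |s| / ε ^ lam - (1 / (1 - lam)) * ((ε + |s|) ^ (1 - lam) - ε ^ (1 - lam)) ∧
      |s| / ε ^ lam - (1 / (1 - lam)) * ((ε + |s|) ^ (1 - lam) - ε ^ (1 - lam)) ≤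
        c₄ * s ^ 2 / (ε ^ lam * (ε + |s|)) := by
  refine ⟨lam / 2, 1, by linarith, one_pos, fun ε hε s => ?_⟩
  rw [← sq_abs s]
  set a := |s| with hadef
  have ha : 0 ≤ a := abs_nonneg s
  have hE : (0:ℝ) < ε ^ lam := rpow_pos_of_pos hε lam
  have h1l : (1:ℝ) - lam ≠ 0 := by linarith
  have hfact : ∀ b : ℝ, 0 < b →
      0 ≤ 1 / ε ^ lam - ((ε + b) ^ lam)⁻¹
        - (lam / 2 * (2 * b) * (ε ^ lam * (ε + b)) - lam / 2 * b ^ 2 * ε ^ lam) / (ε ^ lam * (ε + b)) ^ 2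
      ∧ 0 ≤ (1 * (2 * b) * (ε ^ lam * (ε + b)) - 1 * b ^ 2 * ε ^ lam) / (ε ^ lam * (ε + b)) ^ 2
        - (1 / ε ^ lam - ((ε + b) ^ lam)⁻¹) := by
    intro b hb
    have hεb : (0:ℝ) < ε + b := by linarith
    have hB : (0:ℝ) < (ε + b) ^ lam := rpow_pos_of_pos hεb lam
    set x : ℝ := ε / (ε + b) with hxdef
    have hx0 : 0 < x := by positivity
    have hx1 : x ≤ 1 := by
      rw [hxdef, div_le_one hεb]; linarith
    have hxplam : x ^ lam = ε ^ lam / (ε + b) ^ lam := Real.div_rpow hε.le hεb.le lam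
    have hupperx : ε ^ lam / (ε + b) ^ lam ≤ 1 - lam + lam * x := by
      rw [← hxplam]; exact bern hl0 hl1 hx0.le
    have hlowx : x ^ 2 ≤ ε ^ lam / (ε + b) ^ lam := by
      rw [← hxplam]
      have h2 := Real.rpow_le_rpow_of_exponent_ge hx0 hx1 (by linarith : lam ≤ (2:ℝ))
      calc x ^ 2 = x ^ ((2:ℕ):ℝ) := (Real.rpow_natCast x 2).symm
        _ ≤ x ^ lam := by exact_mod_cast h2
    constructor
    · have key : 1 / ε ^ lam - ((ε + b) ^ lam)⁻¹
          - (lam / 2 * (2 * b) * (ε ^ lam * (ε + b)) - lam / 2 * b ^ 2 * ε ^ lam) / (ε ^ lam * (ε + b)) ^ 2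
          = ((1 - ε ^ lam / (ε + b) ^ lam) - lam / 2 * (1 - x ^ 2)) / ε ^ lam := by
        rw [hxdef]
        field_simp
        ring
      rw [key]
      apply div_nonneg _ hE.le
      nlinarith [sq_nonneg (1 - x), hupperx]
    · have key : (1 * (2 * b) * (ε ^ lam * (ε + b)) - 1 * b ^ 2 * ε ^ lam) / (ε ^ lam * (ε + b)) ^ 2
          - (1 / ε ^ lam - ((ε + b) ^ lam)⁻¹)
          = (ε ^ lam / (ε + b) ^ lam - x ^ 2) / ε ^ lam := by
        rw [hxdef]
        field_simp
        ring
      rw [key]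
      apply div_nonneg _ hE.le
      linarith [hlowx]
  constructor
  · -- lower bound
    have hmono := mono_help
      (fun a : ℝ => a / ε ^ lam - 1 / (1 - lam) * ((ε + a) ^ (1 - lam) - ε ^ (1 - lam))
        - lam / 2 * a ^ 2 / (ε ^ lam * (ε + a)))
      (fun a : ℝ => 1 / ε ^ lam - ((ε + a) ^ lam)⁻¹
        - (lam / 2 * (2 * a) * (ε ^ lam * (ε + a)) - lam / 2 * a ^ 2 * ε ^ lam) / (ε ^ lam * (ε + a)) ^ 2)
      (fun b hb => ((hasDerivPhi hl1 hε hb).sub (hasDerivQ hε (lam / 2) hE hb)))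
      (fun b hb => by simpa using (hfact b hb).1)
      ha
    have h0 : (0:ℝ) / ε ^ lam - 1 / (1 - lam) * ((ε + 0) ^ (1 - lam) - ε ^ (1 - lam))
        - lam / 2 * 0 ^ 2 / (ε ^ lam * (ε + 0)) = 0 := by
      simp
    rw [h0] at hmono
    linarith [hmono]
  · -- upper bound
    have hmono := mono_help
      (fun a : ℝ => 1 * a ^ 2 / (ε ^ lam * (ε + a))
        - (a / ε ^ lam - 1 / (1 - lam) * ((ε + a) ^ (1 - lam) - ε ^ (1 - lam))))
      (fun a : ℝ => (1 * (2 * a) * (ε ^ lam * (ε + a)) - 1 * a ^ 2 * ε ^ lam) / (ε ^ lam * (ε + a)) ^ 2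
        - (1 / ε ^ lam - ((ε + a) ^ lam)⁻¹))
      (fun b hb => ((hasDerivQ hε 1 hE hb).sub (hasDerivPhi hl1 hε hb)))
      (fun b hb => by simpa using (hfact b hb).2)
      ha
    have h0 : 1 * (0:ℝ) ^ 2 / (ε ^ lam * (ε + 0))
        - ((0:ℝ) / ε ^ lam - 1 / (1 - lam) * ((ε + 0) ^ (1 - lam) - ε ^ (1 - lam))) = 0 := by
      simp
    rw [h0] at hmono
    linarith [hmono]
end

section
/- Let δ > 0 and define Ψ(s) = ∫₀^s sqrt(Φ''(z)) dz where Φ(s) = e^(δ s²). Then there exists a constant c(δ) > 0 such that Ψ(s)² ≤ c(δ)·e^(δ s²) for all real s. -/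
open Real intervalIntegral

set_option maxHeartbeats 1000000

theorem stmt8 (δ : ℝ) (hδ : 0 < δ) :
    ∃ c : ℝ, 0 < c ∧ ∀ s : ℝ,
      (∫ z in (0:ℝ)..s, Real.sqrt ((2 * δ + 4 * δ ^ 2 * z ^ 2) * Real.exp (δ * z ^ 2))) ^ 2
        ≤ c * Real.exp (δ * s ^ 2) := by
  set f : ℝ → ℝ := fun z => Real.sqrt ((2 * δ + 4 * δ ^ 2 * z ^ 2) * Real.exp (δ * z ^ 2))
    with hf
  have hfcont : Continuous f := by
    apply Real.continuous_sqrt.comp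
    continuity
  have hQpos : (0:ℝ) < 2 * δ + 4 * δ ^ 2 := by positivity
  set A : ℝ := Real.sqrt (2 * δ + 4 * δ ^ 2) / δ with hA
  set B : ℝ := Real.sqrt ((2 * δ + 4 * δ ^ 2) * Real.exp δ) with hB
  have hApos : 0 < A := by
    apply div_pos _ hδ
    exact Real.sqrt_pos.mpr hQpos
  have hBpos : 0 < B := Real.sqrt_pos.mpr (by positivity)
  set K : ℝ := A + B / Real.sqrt (2 * δ) with hK
  have hKpos : 0 < K := by
    have : 0 < Real.sqrt (2*δ) := Real.sqrt_pos.mpr (by positivity)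
    positivity
  have hsqexp : ∀ z : ℝ, Real.sqrt (Real.exp (δ * z ^ 2)) = Real.exp (δ * z ^ 2 / 2) :=
    fun z => (Real.exp_half _).symm
  have hpt : ∀ z : ℝ, 0 ≤ z → f z ≤ A * δ * z * Real.exp (δ * z ^ 2 / 2) + B := by
    intro z hz
    have hfz : f z = Real.sqrt (2 * δ + 4 * δ ^ 2 * z ^ 2) * Real.exp (δ * z ^ 2 / 2) := by
      rw [hf]
      simp only
      rw [Real.sqrt_mul (by positivity), hsqexp]
    rcases le_total z 1 with h1 | h1
    · have hb : f z ≤ B := by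
        rw [hf, hB]
        apply Real.sqrt_le_sqrt
        have hz2 : z ^ 2 ≤ 1 := by nlinarith
        apply mul_le_mul
        · nlinarith
        · exact Real.exp_le_exp.mpr (by nlinarith)
        · positivity
        · positivity
      have : 0 ≤ A * δ * z * Real.exp (δ * z ^ 2 / 2) := by positivity
      linarith
    · have hb : f z ≤ A * δ * z * Real.exp (δ * z ^ 2 / 2) := by
        rw [hfz]
        apply mul_le_mul_of_nonneg_right _ (Real.exp_nonneg _)
        calc Real.sqrt (2 * δ + 4 * δ ^ 2 * z ^ 2)
            ≤ Real.sqrt ((2 * δ + 4 * δ ^ 2) * z ^ 2) := by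
              apply Real.sqrt_le_sqrt
              have hz2 : 1 ≤ z ^ 2 := by nlinarith
              nlinarith
          _ = Real.sqrt (2 * δ + 4 * δ ^ 2) * z := by
              rw [Real.sqrt_mul hQpos.le, Real.sqrt_sq (by linarith)]
          _ = A * δ * z := by rw [hA]; field_simp
      have : (0:ℝ) ≤ B := hBpos.le
      linarith
  have hderiv : ∀ z : ℝ, HasDerivAt (fun t => A * Real.exp (δ * t ^ 2 / 2) + B * t)
      (A * δ * z * Real.exp (δ * z ^ 2 / 2) + B) z := by
    intro z
    have h1 : HasDerivAt (fun t : ℝ => δ * t ^ 2 / 2) (δ * z) z := by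
      have := ((hasDerivAt_pow 2 z).const_mul δ).div_const 2
      refine this.congr_deriv ?_
      simp; ring
    have h2 : HasDerivAt (fun t => A * Real.exp (δ * t ^ 2 / 2))
        (A * (Real.exp (δ * z ^ 2 / 2) * (δ * z))) z := (h1.exp).const_mul A
    have h3 : HasDerivAt (fun t : ℝ => B * t) B z := by
      simpa using (hasDerivAt_id z).const_mul B
    have := h2.add h3
    refine this.congr_deriv ?_
    ring
  have key : ∀ s : ℝ, 0 ≤ s → (∫ z in (0:ℝ)..s, f z) ≤ K * Real.exp (δ * s ^ 2 / 2) := by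
    intro s hs
    have hgcont : Continuous (fun z : ℝ => A * δ * z * Real.exp (δ * z ^ 2 / 2) + B) := by
      continuity
    have hmono : (∫ z in (0:ℝ)..s, f z)
        ≤ ∫ z in (0:ℝ)..s, (A * δ * z * Real.exp (δ * z ^ 2 / 2) + B) := by
      apply intervalIntegral.integral_mono_on hs
        (hfcont.intervalIntegrable 0 s) (hgcont.intervalIntegrable 0 s)
      intro z hz
      exact hpt z hz.1
    have hint : (∫ z in (0:ℝ)..s, (A * δ * z * Real.exp (δ * z ^ 2 / 2) + B))
        = (A * Real.exp (δ * s ^ 2 / 2) + B * s) - (A * Real.exp (δ * 0 ^ 2 / 2) + B * 0) := by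
      apply intervalIntegral.integral_eq_sub_of_hasDerivAt
      · intro z _; exact hderiv z
      · exact hgcont.intervalIntegrable 0 s
    have hsle : Real.sqrt (2 * δ) * s ≤ Real.exp (δ * s ^ 2 / 2) := by
      have h1 : 1 + δ * s ^ 2 / 2 ≤ Real.exp (δ * s ^ 2 / 2) := by
        have := Real.add_one_le_exp (δ * s ^ 2 / 2)
        linarith
      have h2 : Real.sqrt (2 * δ) * s ≤ 1 + δ * s ^ 2 / 2 := by
        have hsq : Real.sqrt (2 * δ) ^ 2 = 2 * δ := Real.sq_sqrt (by positivity)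
        nlinarith [sq_nonneg (Real.sqrt (2*δ) * s - 2), Real.sqrt_nonneg (2*δ)]
      linarith
    have hBs : B * s ≤ B / Real.sqrt (2 * δ) * Real.exp (δ * s ^ 2 / 2) := by
      have hsp : 0 < Real.sqrt (2 * δ) := Real.sqrt_pos.mpr (by positivity)
      rw [div_mul_eq_mul_div, le_div_iff₀ hsp]
      calc B * s * Real.sqrt (2*δ) = B * (Real.sqrt (2*δ) * s) := by ring
        _ ≤ B * Real.exp (δ * s ^ 2 / 2) := mul_le_mul_of_nonneg_left hsle hBpos.le
    calc (∫ z in (0:ℝ)..s, f z)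
        ≤ (A * Real.exp (δ * s ^ 2 / 2) + B * s) - (A * Real.exp (δ * 0 ^ 2 / 2) + B * 0) := by
          rw [← hint]; exact hmono
      _ ≤ A * Real.exp (δ * s ^ 2 / 2) + B * s := by
          have : 0 ≤ A * Real.exp (δ * 0 ^ 2 / 2) := by positivity
          nlinarith
      _ ≤ K * Real.exp (δ * s ^ 2 / 2) := by
          rw [hK]; nlinarith
  refine ⟨K ^ 2, by positivity, fun s => ?_⟩
  have main : ∀ s : ℝ, 0 ≤ s → (∫ z in (0:ℝ)..s, f z) ^ 2 ≤ K ^ 2 * Real.exp (δ * s ^ 2) := by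
    intro s hs
    have h0 : 0 ≤ (∫ z in (0:ℝ)..s, f z) :=
      intervalIntegral.integral_nonneg hs (fun z _ => Real.sqrt_nonneg _)
    have h2 : (∫ z in (0:ℝ)..s, f z) ^ 2 ≤ (K * Real.exp (δ * s ^ 2 / 2)) ^ 2 :=
      pow_le_pow_left₀ h0 (key s hs) 2
    calc (∫ z in (0:ℝ)..s, f z) ^ 2 ≤ (K * Real.exp (δ * s ^ 2 / 2)) ^ 2 := h2
      _ = K ^ 2 * Real.exp (δ * s ^ 2) := by
          rw [mul_pow, ← Real.exp_nat_mul,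
            show ((2:ℕ):ℝ) * (δ * s ^ 2 / 2) = δ * s ^ 2 by push_cast; ring]
  rcases le_total 0 s with hs | hs
  · exact main s hs
  · have heven : (∫ z in (0:ℝ)..(-s), f z) = - ∫ z in (0:ℝ)..s, f z := by
      have hfe : ∀ z : ℝ, f (-z) = f z := by
        intro z; rw [hf]; simp only; norm_num
      calc (∫ z in (0:ℝ)..(-s), f z) = ∫ z in (0:ℝ)..(-s), f (-z) := by
            simp_rw [hfe]
        _ = ∫ z in (-(-s))..(-0), f z := intervalIntegral.integral_comp_neg f
        _ = - ∫ z in (0:ℝ)..s, f z := by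
            rw [neg_neg, neg_zero, intervalIntegral.integral_symm]
    have hm := main (-s) (by linarith)
    rw [heven] at hm
    have : (-∫ z in (0:ℝ)..s, f z) ^ 2 = (∫ z in (0:ℝ)..s, f z) ^ 2 := by ring
    rw [this] at hm
    simpa using hm
end

section
/- Let N ≥ 3 and let Γ: [0,∞) → [0,∞) be an increasing convex function with Γ(0) = 0 and Γ(t) = t^((N²+N+2)/(N(N+1)))·exp((N+2)/N · t^(2/(N+1))) for t ≥ k₀, for some k₀ > 0. Let Γ*(s) = ∫₀^s (Γ')^(−1)(τ) dτ be its Legendre conjugate primitive. Then there exists c > 0 such that Γ*(s) ≤ c·s·(log* s)^((N+1)/2) for all s ≥ 0, where log* s = max{1, log s}. -/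
/-- Key pointwise bound: any point where the derivative of `Γ` equals `τ`
is bounded by `max (k₀+1) ((max 1 (log τ)) ^ ((N+1)/2))`. -/
lemma stmt12_aux (N : ℕ) (hN : 3 ≤ N) (k₀ : ℝ) (hk₀ : 0 < k₀) (Γ : ℝ → ℝ)
    (hconv : ConvexOn ℝ (Set.Ici 0) Γ)
    (hΓ0 : Γ 0 = 0)
    (hdiff : ∀ t : ℝ, 0 ≤ t → DifferentiableAt ℝ Γ t)
    (hformula : ∀ t : ℝ, k₀ ≤ t →
      Γ t = t ^ ((((N : ℝ) ^ 2 + N + 2)) / ((N : ℝ) * (N + 1))) *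
        Real.exp (((N : ℝ) + 2) / N * t ^ ((2 : ℝ) / ((N : ℝ) + 1))))
    (x τ : ℝ) (hxτ : deriv Γ x = τ) :
    x ≤ max (k₀ + 1) ((max 1 (Real.log τ)) ^ (((N : ℝ) + 1) / 2)) := by
  have hN3 : (3 : ℝ) ≤ (N : ℝ) := by exact_mod_cast hN
  by_cases hx : x ≤ k₀ + 1
  · exact le_max_of_le_left hx
  push_neg at hx
  have hx1 : (1 : ℝ) < x := by linarith
  have hx0 : (0 : ℝ) < x := by linarith
  set α : ℝ := (((N : ℝ) ^ 2 + N + 2)) / ((N : ℝ) * (N + 1)) with hα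
  set β : ℝ := ((N : ℝ) + 2) / N with hβ
  set γ : ℝ := (2 : ℝ) / ((N : ℝ) + 1) with hγ
  have hγpos : 0 < γ := by positivity
  have hβ1 : (1 : ℝ) ≤ β := by
    rw [hβ, le_div_iff₀ (by linarith)]; linarith
  have hα1 : (1 : ℝ) ≤ α := by
    rw [hα, le_div_iff₀ (by nlinarith)]; nlinarith
  -- slope inequality: Γ x ≤ x * deriv Γ x
  have hslope : Γ x / x ≤ deriv Γ x := by
    have := hconv.slope_le_deriv (Set.self_mem_Ici) (Set.mem_Ici.2 hx0.le) hx0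
      (hdiff x hx0.le)
    rw [div_eq_inv_mul]
    simpa [slope, hΓ0] using this
  have hΓx : Γ x = x ^ α * Real.exp (β * x ^ γ) := hformula x (by linarith)
  have hxγ0 : (0 : ℝ) ≤ x ^ γ := Real.rpow_nonneg hx0.le _
  -- exp (x^γ) ≤ τ
  have hexp : Real.exp (x ^ γ) ≤ τ := by
    have h1 : Real.exp (x ^ γ) ≤ Real.exp (β * x ^ γ) := by
      apply Real.exp_le_exp.2; nlinarith
    have h2 : (1 : ℝ) ≤ x ^ (α - 1) :=
      Real.one_le_rpow hx1.le (by linarith)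
    have h3 : Γ x / x = x ^ (α - 1) * Real.exp (β * x ^ γ) := by
      rw [hΓx, Real.rpow_sub hx0, Real.rpow_one]; ring
    have h4 : Real.exp (β * x ^ γ) ≤ x ^ (α - 1) * Real.exp (β * x ^ γ) := by
      nlinarith [Real.exp_pos (β * x ^ γ)]
    calc Real.exp (x ^ γ) ≤ Real.exp (β * x ^ γ) := h1
      _ ≤ x ^ (α - 1) * Real.exp (β * x ^ γ) := h4
      _ = Γ x / x := h3.symm
      _ ≤ deriv Γ x := hslope
      _ = τ := hxτ
  have hτpos : 0 < τ := lt_of_lt_of_le (Real.exp_pos _) hexp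
  have hlog : x ^ γ ≤ Real.log τ := (Real.le_log_iff_exp_le hτpos).2 hexp
  have hlog' : x ^ γ ≤ max 1 (Real.log τ) := hlog.trans (le_max_right _ _)
  have hinv : γ⁻¹ = ((N : ℝ) + 1) / 2 := by
    rw [hγ]; field_simp
  have : x ≤ (max 1 (Real.log τ)) ^ (((N : ℝ) + 1) / 2) := by
    have h5 : (x ^ γ) ^ γ⁻¹ ≤ (max 1 (Real.log τ)) ^ γ⁻¹ :=
      Real.rpow_le_rpow hxγ0 hlog' (by positivity)
    have h6 : (x ^ γ) ^ γ⁻¹ = x := by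
      rw [← Real.rpow_mul hx0.le, mul_inv_cancel₀ hγpos.ne', Real.rpow_one]
    rw [← hinv]
    calc x = (x ^ γ) ^ γ⁻¹ := h6.symm
      _ ≤ (max 1 (Real.log τ)) ^ γ⁻¹ := h5
  exact le_max_of_le_right this

theorem stmt12 (N : ℕ) (hN : 3 ≤ N) (k₀ : ℝ) (hk₀ : 0 < k₀) (Γ : ℝ → ℝ)
    (hmono : StrictMonoOn Γ (Set.Ici 0))
    (hconv : ConvexOn ℝ (Set.Ici 0) Γ)
    (hΓ0 : Γ 0 = 0)
    (hnonneg : ∀ t : ℝ, 0 ≤ t → 0 ≤ Γ t)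
    (hdiff : ∀ t : ℝ, 0 ≤ t → DifferentiableAt ℝ Γ t)
    (hformula : ∀ t : ℝ, k₀ ≤ t →
      Γ t = t ^ ((((N : ℝ) ^ 2 + N + 2)) / ((N : ℝ) * (N + 1))) *
        Real.exp (((N : ℝ) + 2) / N * t ^ ((2 : ℝ) / ((N : ℝ) + 1)))) :
    ∃ c : ℝ, 0 < c ∧ ∀ s : ℝ, 0 ≤ s →
      (∫ τ in (0:ℝ)..s, Function.invFun (deriv Γ) τ) ≤
        c * s * (max 1 (Real.log s)) ^ (((N : ℝ) + 1) / 2) := by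
  set p : ℝ := ((N : ℝ) + 1) / 2 with hp
  set C : ℝ := |Classical.arbitrary ℝ| + k₀ + 2 with hC
  have hCpos : 0 < C := by positivity
  refine ⟨C, hCpos, fun s hs => ?_⟩
  set L : ℝ := (max 1 (Real.log s)) ^ p with hL
  have hL1 : (1 : ℝ) ≤ L := Real.one_le_rpow (le_max_left _ _) (by positivity)
  have hL0 : (0 : ℝ) ≤ L := by linarith
  -- pointwise bound on [0, s]
  have hbound : ∀ τ ∈ Set.Icc (0:ℝ) s, Function.invFun (deriv Γ) τ ≤ C * L := by
    intro τ hτ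
    by_cases hex : ∃ a, deriv Γ a = τ
    · have h1 := Function.invFun_eq hex
      have h2 := stmt12_aux N hN k₀ hk₀ Γ hconv hΓ0 hdiff hformula _ τ h1
      have hlogmono : max 1 (Real.log τ) ≤ max 1 (Real.log s) := by
        rcases le_or_gt τ 1 with h | h
        · have : Real.log τ ≤ 0 := Real.log_nonpos hτ.1 h
          simp [max_le_iff, this.trans zero_le_one, le_max_left]
        · have : Real.log τ ≤ Real.log s := Real.log_le_log (by linarith) hτ.2
          exact max_le (le_max_left _ _) (this.trans (le_max_right _ _))
      have h3 : (max 1 (Real.log τ)) ^ p ≤ L :=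
        Real.rpow_le_rpow (by positivity) hlogmono (by positivity)
      have hCge : k₀ + 1 ≤ C ∧ 2 ≤ C := by
        constructor <;> (rw [hC]; nlinarith [abs_nonneg (Classical.arbitrary ℝ)])
      have h4 : k₀ + 1 ≤ C * L := by nlinarith [hCge.1, hCge.2]
      have h5 : (max 1 (Real.log τ)) ^ p ≤ C * L := by nlinarith [hCge.2]
      exact h2.trans (max_le h4 h5)
    · have h1 : Function.invFun (deriv Γ) τ = Classical.arbitrary ℝ := by
        rw [Function.invFun, dif_neg hex]
      calc Function.invFun (deriv Γ) τ = Classical.arbitrary ℝ := h1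
        _ ≤ |Classical.arbitrary ℝ| := le_abs_self _
        _ ≤ C := by rw [hC]; linarith
        _ = C * 1 := by ring
        _ ≤ C * L := by nlinarith
  by_cases hint : IntervalIntegrable (Function.invFun (deriv Γ)) MeasureTheory.volume 0 s
  · have h1 : (∫ τ in (0:ℝ)..s, Function.invFun (deriv Γ) τ) ≤
        ∫ _ in (0:ℝ)..s, C * L := by
      apply intervalIntegral.integral_mono_on hs hint (intervalIntegrable_const) hbound
    have h2 : (∫ _ in (0:ℝ)..s, C * L) = s * (C * L) := by
      rw [intervalIntegral.integral_const, smul_eq_mul, sub_zero]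
    rw [h2] at h1
    calc (∫ τ in (0:ℝ)..s, Function.invFun (deriv Γ) τ) ≤ s * (C * L) := h1
      _ = C * s * L := by ring
  · rw [intervalIntegral.integral_undef hint]
    positivity
end

section
/- Let (Q, μ) be a finite measure space, v, w: Q → ℝ measurable, 0 < q, and suppose μ{|w| > h} ≤ C₂ h^(−a) for all h > 0 and μ{|v| > k} ≤ C₁ k^(−b) for all k > 0, with a, b, C₁, C₂ > 0. Then there exists C₃ > 0 (depending on a, b, q, C₁, C₂) such that μ{|w|^q |v| > λ} ≤ C₃ λ^(−ab/(qb+a)) for all λ > 0. -/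
open MeasureTheory

theorem stmt13 {Q : Type*} [MeasurableSpace Q] (μ : Measure Q) [IsFiniteMeasure μ]
    (v w : Q → ℝ) (hv : Measurable v) (hw : Measurable w)
    (q a b C₁ C₂ : ℝ) (hq : 0 < q) (ha : 0 < a) (hb : 0 < b)
    (hC₁ : 0 < C₁) (hC₂ : 0 < C₂)
    (hwle : ∀ h : ℝ, 0 < h → μ {x | h < |w x|} ≤ ENNReal.ofReal (C₂ * h ^ (-a)))
    (hvle : ∀ k : ℝ, 0 < k → μ {x | k < |v x|} ≤ ENNReal.ofReal (C₁ * k ^ (-b))) :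
    ∃ C₃ : ℝ, 0 < C₃ ∧ ∀ lam : ℝ, 0 < lam →
      μ {x | lam < |w x| ^ q * |v x|} ≤
        ENNReal.ofReal (C₃ * lam ^ (-(a * b / (q * b + a)))) := by
  have hden : 0 < q * b + a := by positivity
  refine ⟨C₂ + C₁, by positivity, fun lam hlam => ?_⟩
  set e : ℝ := b / (q * b + a) with he
  have hepos : 0 < e := by positivity
  set h : ℝ := lam ^ e with hh
  have hhpos : 0 < h := Real.rpow_pos_of_pos hlam e
  have hkpos : 0 < lam / h ^ q := by positivity
  -- inclusion
  have hsub : {x | lam < |w x| ^ q * |v x|} ⊆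
      {x | h < |w x|} ∪ {x | lam / h ^ q < |v x|} := by
    intro x hx
    by_contra hcon
    simp only [Set.mem_union, Set.mem_setOf_eq, not_or, not_lt] at hcon
    obtain ⟨h1, h2⟩ := hcon
    simp only [Set.mem_setOf_eq] at hx h1 h2
    have hle : |w x| ^ q * |v x| ≤ h ^ q * (lam / h ^ q) := by
      apply mul_le_mul _ h2 (abs_nonneg _) (by positivity)
      exact Real.rpow_le_rpow (abs_nonneg _) h1 hq.le
    have : h ^ q * (lam / h ^ q) = lam := by
      field_simp
    linarith [hx, hle.trans_eq this]
  have key : μ {x | lam < |w x| ^ q * |v x|} ≤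
      ENNReal.ofReal (C₂ * h ^ (-a)) + ENNReal.ofReal (C₁ * (lam / h ^ q) ^ (-b)) :=
    le_trans (measure_mono hsub) (le_trans (measure_union_le _ _)
      (add_le_add (hwle h hhpos) (hvle _ hkpos)))
  have e1 : h ^ (-a) = lam ^ (-(a * b / (q * b + a))) := by
    rw [hh, ← Real.rpow_mul hlam.le]
    congr 1
    rw [he]; field_simp
  have e2 : (lam / h ^ q) ^ (-b) = lam ^ (-(a * b / (q * b + a))) := by
    have hq1 : h ^ q = lam ^ (e * q) := by
      rw [hh, ← Real.rpow_mul hlam.le]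
    have : lam / h ^ q = lam ^ (1 - e * q) := by
      rw [hq1, Real.rpow_sub hlam, Real.rpow_one]
    rw [this, ← Real.rpow_mul hlam.le]
    congr 1
    rw [he]; field_simp; ring_nf
  rw [e1, e2] at key
  refine key.trans (le_of_eq ?_)
  rw [← ENNReal.ofReal_add (by positivity) (by positivity)]
  ring_nf
end

section
/- Let 1 < σ < 2, ε > 0, and define g(s) = Φ(s) − (2(σ−1)/σ²)·Ψ(s)² for s ≥ 0, where Φ(s) = (1/σ)[(ε+s)^σ − ε^σ] − ε^(σ−1) s and Ψ(s) = (ε+s)^(σ/2) − ε^(σ/2). Then g(0) = 0, g'(0) = 0, and g''(s) = ((σ−1)(2−σ)/σ)·(ε+s)^((σ−4)/2)·Ψ(s) ≥ 0 for all s ≥ 0; consequently g(s) ≥ 0 for all s ≥ 0. -/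
theorem stmt19 (σ ε : ℝ) (hσ1 : 1 < σ) (hσ2 : σ < 2) (hε : 0 < ε) :
    let Φ : ℝ → ℝ := fun s => (1 / σ) * ((ε + s) ^ σ - ε ^ σ) - ε ^ (σ - 1) * s
    let Ψ : ℝ → ℝ := fun s => (ε + s) ^ (σ / 2) - ε ^ (σ / 2)
    let g : ℝ → ℝ := fun s => Φ s - (2 * (σ - 1) / σ ^ 2) * (Ψ s) ^ 2
    g 0 = 0 ∧ deriv g 0 = 0 ∧
    (∀ s : ℝ, 0 ≤ s →
      deriv (deriv g) s = ((σ - 1) * (2 - σ) / σ) * (ε + s) ^ ((σ - 4) / 2) * Ψ s ∧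
      0 ≤ deriv (deriv g) s) ∧
    (∀ s : ℝ, 0 ≤ s → 0 ≤ g s) := by
  intro Φ Ψ g
  have hσ0 : (0:ℝ) < σ := by linarith
  have hσ0' : σ ≠ 0 := ne_of_gt hσ0
  -- derivative of t ↦ (ε+t)^p at points with ε+s > 0
  have hd_pow : ∀ (p : ℝ) (s : ℝ), 0 < ε + s →
      HasDerivAt (fun t : ℝ => (ε + t) ^ p) (p * (ε + s) ^ (p - 1)) s := by
    intro p s h
    have h1 : HasDerivAt (fun t : ℝ => ε + t) 1 s := by
      simpa using (hasDerivAt_id s).const_add ε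
    have := (Real.hasDerivAt_rpow_const (x := ε + s) (p := p) (Or.inl h.ne')).comp s h1
    exact this.congr_deriv (mul_one _)
  -- first derivative of g
  have hG1 : ∀ s : ℝ, 0 < ε + s → HasDerivAt g
      ((ε + s) ^ (σ - 1) - ε ^ (σ - 1)
        - (2 * (σ - 1) / σ) * ((ε + s) ^ (σ/2) - ε ^ (σ/2)) * (ε + s) ^ (σ/2 - 1)) s := by
    intro s h
    have h1 := hd_pow σ s h
    have h3 : HasDerivAt Ψ ((σ/2) * (ε + s) ^ (σ/2 - 1)) s := (hd_pow (σ/2) s h).sub_const _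
    have h4 := h3.pow 2
    have h2 : HasDerivAt Φ ((1/σ) * (σ * (ε + s) ^ (σ - 1)) - ε ^ (σ - 1) * 1) s :=
      ((h1.sub_const _).const_mul _).sub ((hasDerivAt_id s).const_mul _)
    have h5 := h2.sub (h4.const_mul (2 * (σ - 1) / σ ^ 2))
    refine h5.congr_deriv ?_
    simp only [Ψ, pow_one]
    field_simp
    ring
  -- second derivative of g (as derivative of the explicit first derivative)
  have hG2 : ∀ s : ℝ, 0 < ε + s → HasDerivAt
      (fun t : ℝ => (ε + t) ^ (σ - 1) - ε ^ (σ - 1)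
        - (2 * (σ - 1) / σ) * ((ε + t) ^ (σ/2) - ε ^ (σ/2)) * (ε + t) ^ (σ/2 - 1))
      (((σ - 1) * (2 - σ) / σ) * (ε + s) ^ ((σ - 4)/2) * ((ε + s) ^ (σ/2) - ε ^ (σ/2))) s := by
    intro s h
    have a := hd_pow (σ - 1) s h
    have b1 : HasDerivAt (fun t : ℝ => (ε + t) ^ (σ/2) - ε ^ (σ/2))
        ((σ/2) * (ε + s) ^ (σ/2 - 1)) s := (hd_pow (σ/2) s h).sub_const _
    have b2 := hd_pow (σ/2 - 1) s h
    have b := (b1.mul b2).const_mul (2 * (σ - 1) / σ)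
    have hh := (a.sub_const (ε ^ (σ - 1))).sub b
    convert hh using 1
    · rfl
    · rfl
    · funext t; simp only [Pi.sub_apply, Pi.mul_apply]; ring
    have e1 : (ε + s) ^ (σ/2 - 1) * (ε + s) ^ (σ/2 - 1) = (ε + s) ^ (σ - 1 - 1) := by
      rw [← Real.rpow_add h, show σ/2 - 1 + (σ/2 - 1) = σ - 1 - 1 from by ring]
    have e2 : (σ/2 - 1 - 1) = (σ - 4)/2 := by ring
    rw [e2, mul_assoc (σ/2), e1]
    field_simp
    ring
  have hΨnn : ∀ s : ℝ, 0 ≤ s → 0 ≤ Ψ s := by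
    intro s hs
    have : ε ^ (σ/2) ≤ (ε + s) ^ (σ/2) :=
      Real.rpow_le_rpow hε.le (by linarith) (by positivity)
    simp only [Ψ]; linarith
  have hG10 : ((ε + 0) ^ (σ - 1) - ε ^ (σ - 1)
      - (2 * (σ - 1) / σ) * ((ε + 0) ^ (σ/2) - ε ^ (σ/2)) * (ε + 0) ^ (σ/2 - 1)) = 0 := by
    simp
  -- deriv g agrees with the explicit formula near nonneg points
  have hdg : ∀ s : ℝ, 0 < ε + s → deriv g s =
      ((ε + s) ^ (σ - 1) - ε ^ (σ - 1)
        - (2 * (σ - 1) / σ) * ((ε + s) ^ (σ/2) - ε ^ (σ/2)) * (ε + s) ^ (σ/2 - 1)) :=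
    fun s h => (hG1 s h).deriv
  have hdd : ∀ s : ℝ, 0 ≤ s → deriv (deriv g) s =
      ((σ - 1) * (2 - σ) / σ) * (ε + s) ^ ((σ - 4)/2) * ((ε + s) ^ (σ/2) - ε ^ (σ/2)) := by
    intro s hs
    have hmem : Set.Ioi (-ε) ∈ nhds s := Ioi_mem_nhds (by linarith)
    have hev : deriv g =ᶠ[nhds s] (fun t : ℝ => (ε + t) ^ (σ - 1) - ε ^ (σ - 1)
        - (2 * (σ - 1) / σ) * ((ε + t) ^ (σ/2) - ε ^ (σ/2)) * (ε + t) ^ (σ/2 - 1)) := by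
      filter_upwards [hmem] with t ht
      exact hdg t (by simp only [Set.mem_Ioi] at ht; linarith)
    rw [hev.deriv_eq, (hG2 s (by linarith)).deriv]
  refine ⟨?_, ?_, ?_, ?_⟩
  · simp [g, Φ, Ψ]
  · rw [hdg 0 (by linarith)]; exact hG10
  · intro s hs
    have hf := hdd s hs
    constructor
    · exact hf
    · rw [hf]
      have h1 : 0 ≤ (σ - 1) * (2 - σ) / σ := by
        apply div_nonneg _ hσ0.le
        nlinarith
      have h2 : (0:ℝ) ≤ (ε + s) ^ ((σ - 4)/2) := (Real.rpow_pos_of_pos (by linarith) _).le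
      exact mul_nonneg (mul_nonneg h1 h2) (hΨnn s hs)
  · intro s hs
    -- g' := explicit first derivative is monotone on [0,∞)
    set G1 : ℝ → ℝ := fun t : ℝ => (ε + t) ^ (σ - 1) - ε ^ (σ - 1)
        - (2 * (σ - 1) / σ) * ((ε + t) ^ (σ/2) - ε ^ (σ/2)) * (ε + t) ^ (σ/2 - 1) with hG1def
    have hpos : ∀ t : ℝ, t ∈ Set.Ici (0:ℝ) → 0 < ε + t := fun t ht => by
      simp only [Set.mem_Ici] at ht; linarith
    have mono1 : MonotoneOn G1 (Set.Ici (0:ℝ)) := by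
      apply monotoneOn_of_deriv_nonneg (convex_Ici 0)
      · exact fun t ht => ((hG2 t (hpos t ht)).differentiableAt.continuousAt).continuousWithinAt
      · intro t ht
        rw [interior_Ici] at ht
        exact ((hG2 t (hpos t (Set.mem_Ici.2 (le_of_lt (Set.mem_Ioi.1 ht))))).differentiableAt).differentiableWithinAt
      · intro t ht
        rw [interior_Ici] at ht
        have ht' : (0:ℝ) < t := ht
        rw [(hG2 t (hpos t (le_of_lt ht'))).deriv]
        have h1 : 0 ≤ (σ - 1) * (2 - σ) / σ := by
          apply div_nonneg _ hσ0.le; nlinarith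
        have h2 : (0:ℝ) ≤ (ε + t) ^ ((σ - 4)/2) := (Real.rpow_pos_of_pos (by linarith) _).le
        exact mul_nonneg (mul_nonneg h1 h2) (hΨnn t (le_of_lt ht'))
    have hG1nn : ∀ t : ℝ, 0 ≤ t → 0 ≤ G1 t := by
      intro t ht
      have := mono1 (Set.self_mem_Ici) (Set.mem_Ici.2 ht) ht
      have h0 : G1 0 = 0 := hG10
      linarith
    have monog : MonotoneOn g (Set.Ici (0:ℝ)) := by
      apply monotoneOn_of_deriv_nonneg (convex_Ici 0)
      · exact fun t ht => ((hG1 t (hpos t ht)).differentiableAt.continuousAt).continuousWithinAt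
      · intro t ht
        rw [interior_Ici] at ht
        exact ((hG1 t (hpos t (Set.mem_Ici.2 (le_of_lt (Set.mem_Ioi.1 ht))))).differentiableAt).differentiableWithinAt
      · intro t ht
        rw [interior_Ici] at ht
        rw [hdg t (hpos t (Set.mem_Ici.2 (le_of_lt (Set.mem_Ioi.1 ht))))]
        exact hG1nn t (le_of_lt (Set.mem_Ioi.1 ht))
    have := monog (Set.self_mem_Ici) (Set.mem_Ici.2 hs) hs
    have h0 : g 0 = 0 := by simp [g, Φ, Ψ]
    linarith
end
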